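/- Let Ae > 0, σ > 0, C > 0, ε > 0 be fixed, and for σ₀ > 0 define Z(C) as in Theorem 6, i.e., Z(C) = [ −Ae/(σ²+σ₀²) + √( A²e²/(σ²+σ₀²)² − (1/(σ²+σ₀²) − 1/σ₀²)·( A²e²/(σ²+σ₀²) − 2·log(C·σ₀/√(σ²+σ₀²)) ) ) ] / ( 1/σ₀² − 1/(σ²+σ₀²) ). Then there exists κ > 0 such that for all 0 < σ₀ < κ: Z(C) < Ae/2 + ε and Z(C) > σ₀·( √( −2(1−ε·σ₀)·log σ₀ ) − ε·Ae ) (Theorem 7: any detection threshold between the lower and upper localizing values lies between σ₀(√(−2(1−εσ₀)log σ₀) − εAe) and Ae/2 + ε for sufficiently small thermal noise). -/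

import Mathlib

open Real

/-- The localizing threshold value `Z(C)` of Theorem 6. -/
noncomputable def Zfun (Ae σ σ0 C : ℝ) : ℝ :=
  (-(Ae / (σ ^ 2 + σ0 ^ 2)) +
      Real.sqrt (Ae ^ 2 / (σ ^ 2 + σ0 ^ 2) ^ 2 -
        (1 / (σ ^ 2 + σ0 ^ 2) - 1 / σ0 ^ 2) *
          (Ae ^ 2 / (σ ^ 2 + σ0 ^ 2) -
            2 * Real.log (C * σ0 / Real.sqrt (σ ^ 2 + σ0 ^ 2))))) /
    (1 / σ0 ^ 2 - 1 / (σ ^ 2 + σ0 ^ 2))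

private lemma aux_sq {σ0 : ℝ} (h0 : 0 < σ0) (h1 : σ0 < 1) : σ0 ^ 2 ≤ 1 := by nlinarith

private lemma aux1 {cm K σ0 : ℝ} (hcm : 0 ≤ cm) (h0 : 0 < σ0) (hσ0_1 : σ0 < 1)
    (hσ0_K : σ0 < K/(2+cm)) : cm + 2/σ0 < K/σ0^2 := by
  have h1 : σ0*(2+cm) < K := by
    rw [lt_div_iff₀ (by linarith : (0:ℝ) < 2 + cm)] at hσ0_K; linarith
  rw [lt_div_iff₀ (by positivity : (0:ℝ) < σ0^2)]
  have h2 : (cm + 2/σ0)*σ0^2 = cm*σ0^2 + 2*σ0 := by field_simp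
  rw [h2]
  have hσ0sq : σ0^2 ≤ σ0 := by nlinarith
  nlinarith [mul_le_mul_of_nonneg_left hσ0sq hcm]

private lemma aux2 {s t U K : ℝ} (hs : 0 < s) (ht : 0 < t) (ht1 : t ≤ 1) (hst : 0 < s + t)
    (hK : K = s*U^2/(s+1)) : K/t ≤ (s/(t*(s+t)))*U^2 := by
  have e1 : (s/(t*(s+t)))*U^2 = s*U^2/(t*(s+t)) := by ring
  have e2 : K/t = s*U^2/(t*(s+1)) := by rw [hK, div_div, mul_comm (s+1) t]
  rw [e1, e2]
  gcongr <;> nlinarith [mul_pos ht hst, mul_nonneg hs.le (sq_nonneg U)]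

private lemma aux3 {a b D U : ℝ} (hb : 0 < b) (h : D < 2*a*U + b*U^2) :
    a^2 + b*D < (a + b*U)^2 := by nlinarith [mul_lt_mul_of_pos_left h hb]

private lemma aux4 {ε σ0 : ℝ} (hε : 0 < ε) (h0 : 0 < σ0) (h : σ0 < 1/(2*ε)) :
    (1:ℝ) ≤ 2*(1-ε*σ0) := by
  rw [lt_div_iff₀ (by linarith : (0:ℝ) < 2*ε)] at h
  nlinarith

private lemma aux5 {e l : ℝ} (he : 0 ≤ e) (h1 : (1:ℝ) ≤ 2*(1-e)) (hl : l < 0) :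
    0 ≤ -2*(1-e)*l ∧ -l ≤ -2*(1-e)*l ∧ -2*(1-e)*l ≤ -2*l := by
  refine ⟨by nlinarith, by nlinarith, by nlinarith⟩

private lemma aux6 {Ae s σ0 ε : ℝ} (hAe : 0 < Ae) (hs : 0 < s) (h0 : 0 < σ0)
    (h : σ0*(2*(s+1)) < ε*s^2) : 2*Ae*σ0*(s+1) ≤ ε*Ae*s*s := by nlinarith

private lemma aux7 {a b D L : ℝ} (hb : 0 < b) (h : 2*a*L + b*L^2 < D) :
    (a + b*L)^2 < a^2 + b*D := by nlinarith [mul_lt_mul_of_pos_left h hb]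

set_option maxHeartbeats 1000000 in
theorem stmt_17 (Ae σ C ε : ℝ) (hAe : 0 < Ae) (hσ : 0 < σ) (hC : 0 < C) (hε : 0 < ε) :
    ∃ κ > 0, ∀ σ0 : ℝ, 0 < σ0 → σ0 < κ →
      Zfun Ae σ σ0 C < Ae / 2 + ε ∧
      σ0 * (Real.sqrt (-2 * (1 - ε * σ0) * Real.log σ0) - ε * Ae) < Zfun Ae σ σ0 C := by
  obtain ⟨s, hsdef⟩ : ∃ x : ℝ, x = σ ^ 2 := ⟨_, rfl⟩
  have hs : 0 < s := by rw [hsdef]; positivity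
  obtain ⟨U, hUdef⟩ : ∃ x : ℝ, x = Ae / 2 + ε := ⟨_, rfl⟩
  have hU : 0 < U := by rw [hUdef]; positivity
  obtain ⟨cmax, hcmaxdef⟩ : ∃ x : ℝ, x = Ae^2/s + Real.log (s+1) - 2*Real.log C := ⟨_, rfl⟩
  obtain ⟨cm, hcmdef⟩ : ∃ x : ℝ, x = max cmax 0 := ⟨_, rfl⟩
  have hcm : 0 ≤ cm := by rw [hcmdef]; exact le_max_right _ _
  obtain ⟨cmin, hcmindef⟩ : ∃ x : ℝ, x = Real.log s - 2*Real.log C := ⟨_, rfl⟩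
  obtain ⟨K, hKdef⟩ : ∃ x : ℝ, x = s*U^2/(s+1) := ⟨_, rfl⟩
  have hK : 0 < K := by
    rw [hKdef]; exact div_pos (mul_pos hs (pow_pos hU 2)) (by linarith)
  obtain ⟨M, hMdef⟩ : ∃ x : ℝ, x = max (ε*Ae) ((ε^2*Ae^2 - cmin)*(s+1)/(ε*Ae*s)) := ⟨_, rfl⟩
  have hMpos : 0 < M := by
    rw [hMdef]; exact lt_of_lt_of_le (mul_pos hε hAe) (le_max_left _ _)
  obtain ⟨r, hrdef⟩ : ∃ x : ℝ, x = s/(s+1) := ⟨_, rfl⟩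
  have hrpos : 0 < r := by rw [hrdef]; exact div_pos hs (by linarith)
  refine ⟨min (rexp (-M^2)) (min 1 (min (1/(2*ε)) (min (ε*s^2/(2*(s+1))) (K/(2 + cm))))),
    lt_min (exp_pos _) (lt_min one_pos (lt_min (div_pos one_pos (by linarith))
      (lt_min (div_pos (mul_pos hε (pow_pos hs 2)) (by linarith)) (div_pos hK (by linarith))))), ?_⟩
  intro σ0 h0 hlt
  have hσ0_exp : σ0 < rexp (-M^2) := lt_of_lt_of_le hlt (min_le_left _ _)
  have hσ0_1 : σ0 < 1 := lt_of_lt_of_le hlt ((min_le_right _ _).trans (min_le_left _ _))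
  have hσ0_ε : σ0 < 1/(2*ε) := lt_of_lt_of_le hlt
    ((min_le_right _ _).trans ((min_le_right _ _).trans (min_le_left _ _)))
  have hσ0_s : σ0 < ε*s^2/(2*(s+1)) := lt_of_lt_of_le hlt
    ((min_le_right _ _).trans ((min_le_right _ _).trans ((min_le_right _ _).trans (min_le_left _ _))))
  have hσ0_K : σ0 < K/(2 + cm) := lt_of_lt_of_le hlt
    ((min_le_right _ _).trans ((min_le_right _ _).trans ((min_le_right _ _).trans (min_le_right _ _))))
  obtain ⟨t, htdef⟩ : ∃ x : ℝ, x = σ0 ^ 2 := ⟨_, rfl⟩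
  have ht : (0:ℝ) < t := by rw [htdef]; positivity
  have hst : (0:ℝ) < s + t := by linarith
  have ht1 : t ≤ 1 := by rw [htdef]; exact aux_sq h0 hσ0_1
  obtain ⟨a, hadef⟩ : ∃ x : ℝ, x = Ae/(s+t) := ⟨_, rfl⟩
  obtain ⟨b, hbdef⟩ : ∃ x : ℝ, x = 1/t - 1/(s+t) := ⟨_, rfl⟩
  obtain ⟨D, hDdef⟩ : ∃ x : ℝ, x = Ae^2/(s+t) - 2*Real.log (C*σ0/Real.sqrt (s+t)) := ⟨_, rfl⟩
  have hapos : 0 < a := by rw [hadef]; exact div_pos hAe hst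
  have hb : b = s/(t*(s+t)) := by
    rw [hbdef]; field_simp; ring
  have hbpos : 0 < b := by rw [hb]; exact div_pos hs (mul_pos ht hst)
  have hZ : Zfun Ae σ σ0 C = (-a + Real.sqrt (a^2 + b*D))/b := by
    rw [hadef, hbdef, hDdef, hsdef, htdef]
    simp only [Zfun]
    congr 3
    rw [div_pow]
    ring
  have hlog : Real.log (C*σ0/Real.sqrt (s+t)) = Real.log C + Real.log σ0 - Real.log (s+t)/2 := by
    rw [Real.log_div (mul_pos hC h0).ne' (Real.sqrt_pos.mpr hst).ne',
      Real.log_mul hC.ne' h0.ne', Real.log_sqrt hst.le]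
  have hD : D = Ae^2/(s+t) - 2*Real.log C - 2*Real.log σ0 + Real.log (s+t) := by
    rw [hDdef, hlog]; ring
  have hlogσ0 : Real.log σ0 < 0 := Real.log_neg h0 hσ0_1
  obtain ⟨q, hqdef⟩ : ∃ x : ℝ, x = s/(s+t) := ⟨_, rfl⟩
  have hqpos : 0 < q := by rw [hqdef]; exact div_pos hs hst
  have hqle1 : q ≤ 1 := by rw [hqdef, div_le_one hst]; linarith
  have hrq : r ≤ q := by
    rw [hrdef, hqdef]
    gcongr
  -- ===== upper bound =====
  have hDle : D ≤ cmax - 2*Real.log σ0 := by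
    rw [hD, hcmaxdef]
    have h1 : Ae^2/(s+t) ≤ Ae^2/s := by gcongr <;> linarith
    have h2 : Real.log (s+t) ≤ Real.log (s+1) := Real.log_le_log hst (by linarith)
    linarith
  have hlogbound : -2*Real.log σ0 ≤ 2/σ0 := by
    have h1 := Real.log_le_sub_one_of_pos (inv_pos.mpr h0)
    rw [Real.log_inv] at h1
    have h3 : 2/σ0 = 2*σ0⁻¹ := by rw [div_eq_mul_inv]
    have h2 : (0:ℝ) < σ0⁻¹ := inv_pos.mpr h0
    linarith
  have hKt : cm + 2/σ0 < K/t := by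
    rw [htdef]; exact aux1 hcm h0 hσ0_1 hσ0_K
  have hDlt : D < 2*a*U + b*U^2 := by
    have hbU : K/t ≤ b*U^2 := by
      rw [hb]; exact aux2 hs ht ht1 hst hKdef
    have haU : 0 ≤ 2*a*U := mul_nonneg (mul_nonneg (by norm_num) hapos.le) hU.le
    have hc : cmax ≤ cm := by rw [hcmdef]; exact le_max_left _ _
    linarith
  have hub : Zfun Ae σ σ0 C < U := by
    rw [hZ, div_lt_iff₀ hbpos]
    have h1 : Real.sqrt (a^2+b*D) < a + b*U :=
      (Real.sqrt_lt' (by linarith [mul_pos hbpos hU])).mpr (aux3 hbpos hDlt)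
    linarith
  -- ===== lower bound =====
  obtain ⟨W, hWdef⟩ : ∃ x : ℝ, x = -2 * (1 - ε * σ0) * Real.log σ0 := ⟨_, rfl⟩
  have hεσ0 : (1:ℝ) ≤ 2*(1-ε*σ0) := aux4 hε h0 hσ0_ε
  obtain ⟨hW0, hWge, hWle⟩ := aux5 (mul_nonneg hε.le h0.le) hεσ0 hlogσ0
  rw [← hWdef] at hW0 hWge hWle
  have hM2 : M^2 < -Real.log σ0 := by
    have h1 := Real.log_lt_log h0 hσ0_exp
    rw [Real.log_exp] at h1; linarith
  obtain ⟨R, hRdef⟩ : ∃ x : ℝ, x = Real.sqrt W := ⟨_, rfl⟩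
  have hsW : 0 ≤ R := by rw [hRdef]; exact Real.sqrt_nonneg _
  have hsWsq : R^2 = W := by rw [hRdef]; exact Real.sq_sqrt hW0
  have hMW : M < R := by rw [hRdef]; exact (Real.lt_sqrt hMpos.le).mpr (by linarith)
  have hMεAe : ε*Ae ≤ M := by rw [hMdef]; exact le_max_left _ _
  obtain ⟨L, hLdef⟩ : ∃ x : ℝ, x = σ0*(R - ε*Ae) := ⟨_, rfl⟩
  have hLpos : 0 < L := by
    rw [hLdef]; exact mul_pos h0 (by linarith)
  have hbL2 : b*L^2 = q*(R - ε*Ae)^2 := by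
    rw [hb, hLdef, hqdef, htdef]
    have h1 : σ0 ≠ 0 := h0.ne'
    have h2 : s + σ0^2 ≠ 0 := by rw [← htdef]; exact hst.ne'
    field_simp
  have hkey : 2*a*L + b*L^2 < D := by
    have c1 : q*W ≤ -2*Real.log σ0 := by
      have := mul_le_of_le_one_left hW0 hqle1
      linarith
    have c2 : q*(ε^2*Ae^2) ≤ ε^2*Ae^2 := mul_le_of_le_one_left (by positivity) hqle1
    have c3 : r*(2*(ε*Ae)*R) ≤ q*(2*(ε*Ae)*R) :=
      mul_le_mul_of_nonneg_right hrq
        (mul_nonneg (mul_nonneg (by norm_num) (mul_nonneg hε.le hAe.le)) hsW)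
    have haAe : a ≤ Ae/s := by rw [hadef]; gcongr <;> linarith
    have hεAe0 : (0:ℝ) ≤ ε*Ae := (mul_pos hε hAe).le
    have hLle : L ≤ σ0*R := by
      rw [hLdef]; exact mul_le_mul_of_nonneg_left (by linarith) h0.le
    have c4 : 2*a*L ≤ 2*(Ae/s)*(σ0*R) := by
      have := mul_le_mul haAe hLle hLpos.le (div_pos hAe hs).le
      linarith
    have p6 : 2*(Ae/s)*σ0 ≤ ε*Ae*r := by
      have hx : 2*(Ae/s)*σ0 = 2*Ae*σ0/s := by ring
      have hy : ε*Ae*r = ε*Ae*s/(s+1) := by rw [hrdef]; ring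
      rw [hx, hy, div_le_div_iff₀ hs (by linarith : (0:ℝ) < s+1)]
      refine aux6 hAe hs h0 ?_
      rw [lt_div_iff₀ (by linarith : (0:ℝ) < 2*(s+1))] at hσ0_s
      linarith
    have c5 : 2*(Ae/s)*(σ0*R) ≤ ε*Ae*r*R := by
      have := mul_le_mul_of_nonneg_right p6 hsW
      linarith
    have hM2' : (ε^2*Ae^2 - cmin)*(s+1)/(ε*Ae*s) ≤ M := by
      rw [hMdef]; exact le_max_right _ _
    have c6 : ε^2*Ae^2 - cmin ≤ ε*Ae*r*M := by
      rw [div_le_iff₀ (by positivity : (0:ℝ) < ε*Ae*s)] at hM2'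
      have hz : ε*Ae*r*M = ε*Ae*s*M/(s+1) := by rw [hrdef]; ring
      rw [hz, le_div_iff₀ (by linarith : (0:ℝ) < s+1)]
      linarith
    have c7 : ε*Ae*r*M < ε*Ae*r*R := by
      have := mul_lt_mul_of_pos_left hMW (mul_pos (mul_pos hε hAe) hrpos)
      linarith
    have c8 : cmin - 2*Real.log σ0 ≤ D := by
      rw [hD, hcmindef]
      have h1 : 0 ≤ Ae^2/(s+t) := by positivity
      have h2 : Real.log s ≤ Real.log (s+t) := Real.log_le_log hs (by linarith)
      linarith
    have e4 : b*L^2 = q*W - q*(2*(ε*Ae)*R) + q*(ε^2*Ae^2) := by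
      rw [hbL2]
      have e3 : (R - ε*Ae)^2 = R^2 - 2*(ε*Ae)*R + ε^2*Ae^2 := by ring
      rw [e3, hsWsq]; ring
    linarith
  have hlb : L < Zfun Ae σ σ0 C := by
    rw [hZ, lt_div_iff₀ hbpos]
    have h9 : a + b*L < Real.sqrt (a^2 + b*D) := by
      have h0' : 0 ≤ a + b*L := by linarith [mul_pos hbpos hLpos]
      exact (Real.lt_sqrt h0').mpr (aux7 hbpos hkey)
    linarith
  rw [hLdef, hRdef, hWdef] at hlb
  rw [hUdef] at hub
  exact ⟨hub, hlb⟩
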